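/- The q-binomial theorem: for |q|<1, |z|<1 and any complex a, one has ∑_{n=0}^∞ (a;q)_n/(q;q)_n · z^n = (a z; q)_∞ / (z; q)_∞. -/

import Mathlib

/-- The infinite q-Pochhammer symbol `(a;q)_∞ = ∏_{j≥0} (1 - a q^j)`. -/
noncomputable def qp (a q : ℂ) : ℂ := ∏' j : ℕ, (1 - a * q ^ j)

/-- The finite q-Pochhammer symbol `(a;q)_n = ∏_{j=0}^{n-1} (1 - a q^j)`. -/
noncomputable def qpf (a q : ℂ) (n : ℕ) : ℂ := ∏ j ∈ Finset.range n, (1 - a * q ^ j)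

open Complex Filter Finset Topology


lemma qpf_succ (a q : ℂ) (n : ℕ) : qpf a q (n+1) = qpf a q n * (1 - a * q^n) :=
  Finset.prod_range_succ _ _

lemma summable_log_fac (x q : ℂ) (hq : ‖q‖ < 1) :
    Summable (fun j : ℕ => Complex.log (1 - x * q ^ j)) := by
  apply Summable.of_norm_bounded_eventually_nat (g := fun j => 2 * (‖x‖ * ‖q‖ ^ j))
  · exact ((summable_geometric_of_lt_one (norm_nonneg q) hq).mul_left _).mul_left 2
  · have h0 : Tendsto (fun j : ℕ => ‖x‖ * ‖q‖ ^ j) atTop (𝓝 0) := by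
      simpa using (tendsto_pow_atTop_nhds_zero_of_lt_one (norm_nonneg q) hq).const_mul
        (‖x‖)
    filter_upwards [h0.eventually_le_const (show (0:ℝ) < 1/2 by norm_num)] with j hj
    set w : ℂ := -(x * q ^ j) with hw
    have hwn : ‖w‖ = ‖x‖ * ‖q‖ ^ j := by
      simp [hw, map_mul, map_pow]
    have hw2 : ‖w‖ ≤ 1/2 := by rw [hwn]; exact hj
    have hw1 : ‖w‖ < 1 := lt_of_le_of_lt hw2 (by norm_num)
    have hb := Complex.norm_log_one_add_le hw1
    have h1 : (1 : ℂ) + w = 1 - x * q ^ j := by rw [hw]; ring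
    rw [h1] at hb
    have hinv : (1 - ‖w‖)⁻¹ ≤ 2 := by
      rw [inv_le_comm₀ (by linarith) (by norm_num)]; linarith
    have hnn : (0:ℝ) ≤ ‖w‖ := norm_nonneg w
    calc ‖Complex.log (1 - x * q ^ j)‖ ≤ ‖w‖^2 * (1 - ‖w‖)⁻¹ / 2 + ‖w‖ := hb
      _ ≤ 2 * ‖w‖ := by nlinarith [sq_nonneg ‖w‖]
      _ = 2 * (‖x‖ * ‖q‖ ^ j) := by rw [hwn]

lemma hasProd_qp (x q : ℂ) (hq : ‖q‖ < 1) :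
    HasProd (fun j : ℕ => 1 - x * q ^ j) (qp x q) := by
  by_cases h : ∀ j : ℕ, 1 - x * q ^ j ≠ 0
  · exact (Complex.hasProd_of_hasSum_log (fun j => h j)
      (summable_log_fac x q hq).hasSum).multipliable.hasProd
  · push_neg at h
    obtain ⟨j₀, hj₀⟩ := h
    have h0 : HasProd (fun j : ℕ => 1 - x * q ^ j) 0 := by
      rw [HasProd]
      apply Tendsto.congr' _ tendsto_const_nhds
      filter_upwards [eventually_ge_atTop ({j₀} : Finset ℕ)] with s hs
      exact (Finset.prod_eq_zero (hs (Finset.mem_singleton_self j₀)) hj₀).symm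
    have : qp x q = 0 := h0.tprod_eq
    rw [this]; exact h0

lemma qp_ne_zero (x q : ℂ) (hq : ‖q‖ < 1) (h : ∀ j : ℕ, 1 - x * q ^ j ≠ 0) :
    qp x q ≠ 0 := by
  have := Complex.cexp_tsum_eq_tprod (f := fun j => 1 - x * q ^ j)
      (fun j => h j) (summable_log_fac x q hq)
  rw [qp, ← this]
  exact Complex.exp_ne_zero _

lemma tendsto_qpf (x q : ℂ) (hq : ‖q‖ < 1) :
    Tendsto (fun n => qpf x q n) atTop (𝓝 (qp x q)) :=
  (hasProd_qp x q hq).tendsto_prod_nat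

/-- The q-binomial theorem: for `|q| < 1` and `|z| < 1`,
`∑_{n≥0} (a;q)_n/(q;q)_n z^n = (az;q)_∞/(z;q)_∞`. -/
theorem q_binomial (q a z : ℂ) (hq : ‖q‖ < 1) (hz : ‖z‖ < 1) :
    (∑' n : ℕ, qpf a q n / qpf q q n * z ^ n) = qp (a * z) q / qp z q := by
  have hq' : ‖q‖ < 1 := hq
  have hz' : ‖z‖ < 1 := hz
  set c : ℕ → ℂ := fun n => qpf a q n / qpf q q n with hc
  -- nonvanishing of factors
  have habs : ∀ x : ℂ, ‖x‖ < 1 → ∀ j : ℕ, 1 - x * q ^ j ≠ 0 := by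
    intro x hx j h
    have h1 : x * q ^ j = 1 := by linear_combination -h
    have h2 : ‖x * q ^ j‖ < 1 := by
      rw [norm_mul, norm_pow]
      have hp : ‖q‖ ^ j ≤ 1 := pow_le_one₀ (norm_nonneg q) hq'.le
      nlinarith [norm_nonneg x, pow_nonneg (norm_nonneg q) j]
    rw [h1] at h2; simp at h2
  have hqq : ∀ j : ℕ, 1 - q * q ^ j ≠ 0 := habs q hq'
  have hzz : ∀ j : ℕ, 1 - z * q ^ j ≠ 0 := habs z hz'
  have hqpfq : ∀ n, qpf q q n ≠ 0 := fun n =>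
    Finset.prod_ne_zero_iff.mpr fun j _ => hqq j
  -- boundedness of coefficients
  have hct : Tendsto (fun n => ‖c n‖) atTop (𝓝 ‖qp a q / qp q q‖) :=
    ((tendsto_qpf a q hq).div (tendsto_qpf q q hq) (qp_ne_zero q q hq hqq)).norm
  obtain ⟨M, hMmem⟩ := hct.bddAbove_range
  have hM : ∀ n, ‖c n‖ ≤ M := fun n => hMmem ⟨n, rfl⟩
  have hM0 : 0 ≤ M := le_trans (norm_nonneg _) (hM 0)
  -- summability
  have hsum : ∀ w : ℂ, ‖w‖ < 1 → Summable (fun n => c n * w ^ n) := by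
    intro w hw
    apply Summable.of_norm_bounded (g := fun n => M * ‖w‖ ^ n)
      ((summable_geometric_of_lt_one (norm_nonneg w) hw).mul_left M)
    intro n
    rw [norm_mul, norm_pow]
    exact mul_le_mul_of_nonneg_right (hM n) (pow_nonneg (norm_nonneg w) n)
  have hc0 : c 0 = 1 := by simp [hc, qpf]
  -- key coefficient recurrence
  have hkey : ∀ n : ℕ, c (n + 1) * (1 - q * q ^ n) = c n * (1 - a * q ^ n) := by
    intro n
    simp only [hc, qpf_succ]
    rw [← div_div, div_mul_cancel₀ _ (hqq n)]
    ring
  -- functional equation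
  have hfe : ∀ w : ℂ, ‖w‖ < 1 →
      (1 - w) * (∑' n, c n * w ^ n) = (1 - a * w) * (∑' n, c n * (q * w) ^ n) := by
    intro w hw
    have hqw : ‖q * w‖ < 1 := by
      rw [norm_mul]
      nlinarith [norm_nonneg q, norm_nonneg w]
    have h1 := hsum w hw
    have h2 := hsum (q * w) hqw
    have hg : Summable (fun n => c n * w ^ n - c n * (q * w) ^ n) := h1.sub h2
    have e1 : (∑' n, c n * w ^ n) - (∑' n, c n * (q * w) ^ n)
        = ∑' n, (c n * w ^ n - c n * (q * w) ^ n) := (Summable.tsum_sub h1 h2).symm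
    have e2 : (∑' n, (c n * w ^ n - c n * (q * w) ^ n))
        = ∑' n, (c (n + 1) * w ^ (n + 1) - c (n + 1) * (q * w) ^ (n + 1)) := by
      rw [Summable.tsum_eq_zero_add hg]; simp
    have e3 : (∑' n, (c (n + 1) * w ^ (n + 1) - c (n + 1) * (q * w) ^ (n + 1)))
        = ∑' n, (w * (c n * w ^ n) - a * w * (c n * (q * w) ^ n)) := by
      apply tsum_congr; intro n
      linear_combination (w ^ (n + 1)) * hkey n
    have e4 : (∑' n, (w * (c n * w ^ n) - a * w * (c n * (q * w) ^ n)))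
        = w * (∑' n, c n * w ^ n) - a * w * (∑' n, c n * (q * w) ^ n) := by
      rw [Summable.tsum_sub (h1.mul_left w) (h2.mul_left (a * w)), tsum_mul_left, tsum_mul_left]
    have hmain := e1.trans ((e2.trans e3).trans e4)
    linear_combination hmain
  -- iteration
  have hiter : ∀ N : ℕ, qpf z q N * (∑' n, c n * z ^ n)
      = qpf (a * z) q N * (∑' n, c n * (q ^ N * z) ^ n) := by
    intro N
    induction N with
    | zero => simp [qpf]
    | succ N ih =>
      have hlt : ‖q ^ N * z‖ < 1 := by
        rw [norm_mul, norm_pow]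
        have hp : ‖q‖ ^ N ≤ 1 := pow_le_one₀ (norm_nonneg q) hq'.le
        nlinarith [norm_nonneg z, pow_nonneg (norm_nonneg q) N]
      have hfeN := hfe (q ^ N * z) hlt
      rw [show q * (q ^ N * z) = q ^ (N + 1) * z from by ring] at hfeN
      rw [qpf_succ, qpf_succ]
      linear_combination (1 - z * q ^ N) * ih + qpf (a * z) q N * hfeN
  -- limit of the tail sums
  have hT1 : Tendsto (fun N : ℕ => ∑' n, c n * (q ^ N * z) ^ n) atTop (𝓝 1) := by
    have hres := tendsto_tsum_of_dominated_convergence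
      (𝓕 := (atTop : Filter ℕ))
      (f := fun (N : ℕ) (n : ℕ) => c n * (q ^ N * z) ^ n)
      (g := fun n => if n = 0 then (1 : ℂ) else 0)
      (bound := fun n => M * ‖z‖ ^ n)
      ((summable_geometric_of_lt_one (norm_nonneg z) hz').mul_left M)
      (by
        intro k
        match k with
        | 0 => simp [hc0]
        | (m + 1) =>
          rw [show (if m + 1 = 0 then (1:ℂ) else 0) = 0 from by simp]
          have he : ∀ N : ℕ, c (m + 1) * (q ^ N * z) ^ (m + 1)
              = (c (m + 1) * z ^ (m + 1)) * (q ^ (m + 1)) ^ N := by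
            intro N
            rw [mul_pow, ← pow_mul, mul_comm N (m + 1), pow_mul]
            ring
          have hlt : ‖q ^ (m + 1)‖ < 1 := by
            rw [norm_pow]
            calc ‖q‖ ^ (m + 1) ≤ ‖q‖ ^ 1 :=
              pow_le_pow_of_le_one (norm_nonneg q) hq'.le (by omega)
            _ < 1 := by simpa using hq'
          have := (tendsto_pow_atTop_nhds_zero_of_norm_lt_one hlt).const_mul
            (c (m + 1) * z ^ (m + 1))
          simpa [he] using this)
      (by
        filter_upwards with N k
        rw [norm_mul, norm_pow, norm_mul, norm_pow]
        have h1 : ‖q‖ ^ N * ‖z‖ ≤ ‖z‖ := by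
          have : ‖q‖ ^ N ≤ 1 := pow_le_one₀ (norm_nonneg q) hq'.le
          nlinarith [norm_nonneg z]
        have h2 : (‖q‖ ^ N * ‖z‖) ^ k ≤ ‖z‖ ^ k :=
          pow_le_pow_left₀ (mul_nonneg (pow_nonneg (norm_nonneg q) N) (norm_nonneg z)) h1 k
        exact mul_le_mul (hM k) h2
          (pow_nonneg (mul_nonneg (pow_nonneg (norm_nonneg q) N) (norm_nonneg z)) k) hM0)
    simpa using hres
  -- conclude by uniqueness of limits
  have hA : Tendsto (fun N => qpf z q N * (∑' n, c n * z ^ n)) atTop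
      (𝓝 (qp z q * (∑' n, c n * z ^ n))) := (tendsto_qpf z q hq).mul_const _
  have hB : Tendsto (fun N => qpf (a * z) q N * (∑' n, c n * (q ^ N * z) ^ n)) atTop
      (𝓝 (qp (a * z) q * 1)) := (tendsto_qpf (a * z) q hq).mul hT1
  have heq : qp z q * (∑' n, c n * z ^ n) = qp (a * z) q * 1 :=
    tendsto_nhds_unique (hA.congr fun N => hiter N) hB
  rw [mul_one] at heq
  have hzq : qp z q ≠ 0 := qp_ne_zero z q hq hzz
  rw [eq_div_iff hzq]
  linear_combination heq
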